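/- With the setup of the previous statement (𝒮 a sparsity subspace of block lower triangular matrices, YX nilpotent for all X ∈ 𝒮), if 𝒮 is quadratically invariant with respect to Y then h(𝒮, Y) = -𝒮, i.e., the map L ↦ -L(I - YL)^{-1} is a bijection from 𝒮 onto 𝒮 with inverse Q ↦ Q(I + YQ)^{-1}. -/
import Mathlib


open Matrix Pointwise

/-- Boolean matrix product: (X·Z)(i,j) = 1 iff ∃ k, X(i,k)=1 ∧ Z(k,j)=1. -/
def bmul {α β γ : Type} [Fintype β] (X : Matrix α β Bool) (Z : Matrix β γ Bool) :
    Matrix α γ Bool :=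
  fun i j => decide (∃ k, X i k = true ∧ Z k j = true)

/-- Entrywise order on binary matrices. -/
def ble {α β : Type} (X Y : Matrix α β Bool) : Prop :=
  ∀ i j, X i j = true → Y i j = true

/-- Support pattern of a real matrix. -/
noncomputable def struct {α β : Type} (Y : Matrix α β ℝ) : Matrix α β Bool :=
  fun i j => decide (Y i j ≠ 0)

/-- Sparsity subspace of a binary matrix. -/
def sparse {α β : Type} (X : Matrix α β Bool) : Set (Matrix α β ℝ) :=
  {Y | ∀ i j, X i j = false → Y i j = 0}

/-- Boolean matrix power. -/
def bpow {α : Type} [Fintype α] [DecidableEq α] (Z : Matrix α α Bool) :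
    ℕ → Matrix α α Bool
  | 0 => fun i j => decide (i = j)
  | k + 1 => bmul (bpow Z k) Z
open Finset

lemma sparse_sum {α β : Type} {Sb : Matrix α β Bool} {s : Finset ℕ}
    {f : ℕ → Matrix α β ℝ} (h : ∀ k ∈ s, f k ∈ sparse Sb) :
    (∑ k ∈ s, f k) ∈ sparse Sb := by
  intro i j hij
  rw [Matrix.sum_apply]
  exact Finset.sum_eq_zero fun k hk => h k hk i j hij

lemma sparse_smul {α β : Type} {Sb : Matrix α β Bool} {A : Matrix α β ℝ} (c : ℝ)
    (h : A ∈ sparse Sb) : c • A ∈ sparse Sb := by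
  intro i j hij
  simp [h i j hij]

lemma mul_pow_mem {m p : ℕ} {Sb : Matrix (Fin m) (Fin p) Bool} {Y : Matrix (Fin p) (Fin m) ℝ}
    (hQI : ∀ L ∈ sparse Sb, ∀ L' ∈ sparse Sb, L * Y * L' ∈ sparse Sb)
    {L Q : Matrix (Fin m) (Fin p) ℝ} (hL : L ∈ sparse Sb) (hQ : Q ∈ sparse Sb) :
    ∀ n, L * (Y * Q) ^ n ∈ sparse Sb := by
  intro n
  induction n with
  | zero => simpa using hL
  | succ k ih =>
    have : L * (Y * Q) ^ (k + 1) = (L * (Y * Q) ^ k) * Y * Q := by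
      simp only [pow_succ, Matrix.mul_assoc]
    rw [this]
    exact hQI _ ih _ hQ

lemma one_sub_mul_geom {n : ℕ} {N : Matrix (Fin n) (Fin n) ℝ} {k : ℕ} (hk : N ^ k = 0) :
    (1 - N) * (∑ i ∈ range k, N ^ i) = 1 := by
  have h2 : (1 - N) * ∑ i ∈ range k, N ^ i = -((N - 1) * ∑ i ∈ range k, N ^ i) := by
    noncomm_ring
  rw [h2, mul_geom_sum N k, hk]; simp

/-- the inverse-formula lemma: for L ∈ 𝒮, g (f L) = L -/
lemma g_of_f {m p : ℕ} (Sb : Matrix (Fin m) (Fin p) Bool) (Y : Matrix (Fin p) (Fin m) ℝ)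
    (hnil : ∀ X ∈ sparse Sb, IsNilpotent (Y * X))
    {L : Matrix (Fin m) (Fin p) ℝ} (hL : L ∈ sparse Sb) :
    (L * (1 - Y * L)⁻¹) * (Y * (L * (1 - Y * L)⁻¹) + 1)⁻¹ = L := by
  obtain ⟨k, hk⟩ := hnil L hL
  set B : Matrix (Fin p) (Fin p) ℝ := ∑ i ∈ range k, (Y * L) ^ i with hB
  have hone : (1 - Y * L) * B = 1 := one_sub_mul_geom hk
  have hcomm : B * (1 - Y * L) = 1 := (mul_eq_one_comm).mp hone
  have hinv : (1 - Y * L)⁻¹ = B := Matrix.inv_eq_right_inv hone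
  rw [hinv]
  -- Y * (L * B) + 1 = B
  have hYLB : Y * (L * B) + 1 = B := by
    have : (1 - Y * L) * B = B - Y * L * B := by noncomm_ring
    rw [this] at hone
    have := sub_eq_iff_eq_add.mp hone
    rw [← Matrix.mul_assoc]
    linear_combination (norm := noncomm_ring) -this
  rw [hYLB]
  have hBinv : B⁻¹ = 1 - Y * L := Matrix.inv_eq_right_inv hcomm
  rw [hBinv, Matrix.mul_assoc, hcomm, Matrix.mul_one]

theorem stmt7 {m p : ℕ} (Sb : Matrix (Fin m) (Fin p) Bool) (Y : Matrix (Fin p) (Fin m) ℝ)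
    (hnil : ∀ X ∈ sparse Sb, IsNilpotent (Y * X))
    (hQI : ∀ L ∈ sparse Sb, ∀ L' ∈ sparse Sb, L * Y * L' ∈ sparse Sb) :
    ((fun L : Matrix (Fin m) (Fin p) ℝ => -(L * (1 - Y * L)⁻¹)) '' sparse Sb = -(sparse Sb)) ∧
    Set.BijOn (fun L : Matrix (Fin m) (Fin p) ℝ => L * (1 - Y * L)⁻¹) (sparse Sb) (sparse Sb) ∧
    (∀ L ∈ sparse Sb,
      (L * (1 - Y * L)⁻¹ : Matrix (Fin m) (Fin p) ℝ) *
        ((Y * (L * (1 - Y * L)⁻¹ : Matrix (Fin m) (Fin p) ℝ) + 1 : Matrix (Fin p) (Fin p) ℝ))⁻¹ = L) := by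
  set f : Matrix (Fin m) (Fin p) ℝ → Matrix (Fin m) (Fin p) ℝ :=
    fun L => L * (1 - Y * L)⁻¹ with hf
  -- MapsTo
  have hmaps : Set.MapsTo f (sparse Sb) (sparse Sb) := by
    intro L hL
    obtain ⟨k, hk⟩ := hnil L hL
    have hinv : (1 - Y * L)⁻¹ = ∑ i ∈ range k, (Y * L) ^ i :=
      Matrix.inv_eq_right_inv (one_sub_mul_geom hk)
    show L * (1 - Y * L)⁻¹ ∈ sparse Sb
    rw [hinv, Matrix.mul_sum]
    exact sparse_sum fun i _ => mul_pow_mem hQI hL hL i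
  -- InjOn
  have hinj : Set.InjOn f (sparse Sb) := by
    intro L1 h1 L2 h2 heq
    have e1 := g_of_f Sb Y hnil h1
    have e2 := g_of_f Sb Y hnil h2
    simp only [hf] at heq
    rw [← e1, ← e2, heq]
  -- SurjOn
  have hsurj : Set.SurjOn f (sparse Sb) (sparse Sb) := by
    intro Q hQ
    obtain ⟨k, hk0⟩ := (hnil Q hQ).neg
    set C : Matrix (Fin p) (Fin p) ℝ := ∑ i ∈ range k, (-(Y * Q)) ^ i with hC
    have hone : (1 + Y * Q) * C = 1 := by
      have := one_sub_mul_geom hk0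
      rwa [sub_neg_eq_add] at this
    have hcomm : C * (1 + Y * Q) = 1 := (mul_eq_one_comm).mp hone
    refine ⟨Q * C, ?_, ?_⟩
    · -- Q * C ∈ sparse
      rw [hC, Matrix.mul_sum]
      refine sparse_sum fun i _ => ?_
      have : Q * (-(Y * Q)) ^ i = (-1 : ℝ) ^ i • (Q * (Y * Q) ^ i) := by
        have h1 : (-(Y * Q)) = (-1 : ℝ) • (Y * Q) := by simp
        rw [h1, smul_pow, Matrix.mul_smul]
      rw [this]
      exact sparse_smul _ (mul_pow_mem hQI hQ hQ i)
    · -- f (Q * C) = Q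
      show (Q * C) * (1 - Y * (Q * C))⁻¹ = Q
      have h1 : 1 - Y * (Q * C) = C := by
        have : Y * (Q * C) = (Y * Q) * C := by rw [Matrix.mul_assoc]
        rw [this, ← hone]
        noncomm_ring
      rw [h1, Matrix.inv_eq_right_inv hcomm, Matrix.mul_assoc, hcomm, Matrix.mul_one]
  have hbij : Set.BijOn f (sparse Sb) (sparse Sb) := ⟨hmaps, hinj, hsurj⟩
  refine ⟨?_, hbij, fun L hL => g_of_f Sb Y hnil hL⟩
  have himg : f '' sparse Sb = sparse Sb := hbij.image_eq
  have : (fun L : Matrix (Fin m) (Fin p) ℝ => -(L * (1 - Y * L)⁻¹)) = (fun x => -x) ∘ f := rfl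
  rw [this, Set.image_comp, himg]
  ext x
  simp only [Set.mem_image, Set.mem_neg]
  constructor
  · rintro ⟨a, ha, rfl⟩; simpa using ha
  · intro h; exact ⟨-x, h, neg_neg x⟩
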